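/- Let f₂ : ℝ^{n₂} → ℝ, σ > 0, A₁ ∈ ℝ^{l×n₁}, A₂ ∈ ℝ^{l×n₂}, b ∈ ℝ^l, τ ∈ [3/4, 1], and r > σ_max(A₂ᵀA₂). Let β⁻, β, β⁺ > 0 satisfy β⁻ ≤ β ≤ β⁺ and β(τ r β + σ) ≥ τ r (β⁺)². Define D := τ r β I_{n₂} − β A₂ᵀA₂ and D⁻ := τ r β⁻ I_{n₂} − β⁻ A₂ᵀA₂. Let x₁^{k+1} ∈ ℝ^{n₁}, x₂^{k−1}, x₂^k, x₂^{k+1}, x₂' ∈ ℝ^{n₂}, λ^k, λ ∈ ℝ^l, and set λ^{k+1} := λ^k − β(A₁x₁^{k+1} + A₂x₂^{k+1} − b) and λ̃ := λ^k − β(A₁x₁^{k+1} + A₂x₂^k − b). Assume: (i) for all x₂: f₂(x₂) − f₂(x₂^{k+1}) + (x₂ − x₂^{k+1})ᵀ[−A₂ᵀλ^{k+1} + D(x₂^{k+1} − x₂^k)] ≥ (σ/2)‖x₂^{k+1} − x₂‖²; (ii) for all x₂: f₂(x₂) − f₂(x₂^k) + (x₂ − x₂^k)ᵀ[−A₂ᵀλ^k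 + D⁻(x₂^k − x₂^{k−1})] ≥ (σ/2)‖x₂^k − x₂‖². Define H := blockdiag(τ r β I_{n₂}, (1/β) I_l), G := blockdiag(D, (1/β) I_l), H₀(s) := blockdiag(τ r s² I_{n₂}, I_l) for s > 0, Θ(s, w) := (1/2) s² ‖w‖²_{τ r I_{n₂} + (1 − 2τ) A₂ᵀA₂}, and v^k := (x₂^k, λ^k), v^{k+1} := (x₂^{k+1}, λ^{k+1}), ṽ := (x₂^{k+1}, λ̃), v' := (x₂', λ). Then β( ‖v^{k+1} − v'‖²_H + σ‖x₂^{k+1} − x₂'‖² − ‖v^k − v'‖²_H + ‖v^k − ṽ‖²_G ) ≥ ‖v^{k+1} − v'‖²_{H₀(β⁺)} − ‖v^k − v'‖²_{H₀(β)} + Θ(β⁺, x₂^k − x₂^{k+1}) − Θ(β, x₂^{k−1} − x₂^k). -/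

import Mathlib

open Matrix

/-- `qf D w = wᵀ D w`, the (possibly indefinite) quadratic form `‖w‖²_D`. -/
noncomputable def qf {m : Type*} [Fintype m] (D : Matrix m m ℝ) (w : m → ℝ) : ℝ :=
  w ⬝ᵥ D.mulVec w

/-- `maxEig B` is the largest eigenvalue of `B` (for a symmetric matrix, the
supremum of its eigenvalue set), denoted `σ_max(B)` in the paper. -/
noncomputable def maxEig {m : Type*} [Fintype m] (B : Matrix m m ℝ) : ℝ :=
  sSup {μ : ℝ | ∃ v : m → ℝ, v ≠ 0 ∧ B.mulVec v = μ • v}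

lemma dot_AtA {l n : ℕ} (A : Matrix (Fin l) (Fin n) ℝ) (x y : Fin n → ℝ) :
    x ⬝ᵥ ((Aᵀ * A) *ᵥ y) = (A *ᵥ x) ⬝ᵥ (A *ᵥ y) := by
  rw [← mulVec_mulVec, dotProduct_mulVec, vecMul_transpose]

lemma dot_At {l n : ℕ} (A : Matrix (Fin l) (Fin n) ℝ) (x : Fin n → ℝ) (y : Fin l → ℝ) :
    x ⬝ᵥ (Aᵀ *ᵥ y) = (A *ᵥ x) ⬝ᵥ y := by
  rw [dotProduct_mulVec, vecMul_transpose]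

lemma dot_self_nonneg {n : ℕ} (x : Fin n → ℝ) : 0 ≤ x ⬝ᵥ x := by
  unfold dotProduct
  exact Finset.sum_nonneg fun i _ => mul_self_nonneg _

lemma dot_sub_expand {n : ℕ} (x y : Fin n → ℝ) :
    (x - y) ⬝ᵥ (x - y) = x ⬝ᵥ x - 2 * (x ⬝ᵥ y) + y ⬝ᵥ y := by
  rw [dotProduct_sub, sub_dotProduct, sub_dotProduct, dotProduct_comm y x]; ring

lemma dot_add_expand {n : ℕ} (x y : Fin n → ℝ) :
    (x + y) ⬝ᵥ (x + y) = x ⬝ᵥ x + 2 * (x ⬝ᵥ y) + y ⬝ᵥ y := by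
  rw [dotProduct_add, add_dotProduct, add_dotProduct, dotProduct_comm y x]; ring

lemma sum_elim_sub {n l : ℕ} (a c : Fin n → ℝ) (b d : Fin l → ℝ) :
    Sum.elim a b - Sum.elim c d = Sum.elim (a - c) (b - d) := by
  funext i; cases i <;> simp

lemma qf_blocks {n l : ℕ} (B : Matrix (Fin n) (Fin n) ℝ) (C : Matrix (Fin l) (Fin l) ℝ)
    (x : Fin n → ℝ) (y : Fin l → ℝ) :
    qf (Matrix.fromBlocks B 0 0 C) (Sum.elim x y) = x ⬝ᵥ (B *ᵥ x) + y ⬝ᵥ (C *ᵥ y) := by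
  unfold qf
  rw [fromBlocks_mulVec]
  simp only [Matrix.zero_mulVec, add_zero, zero_add]
  rw [sumElim_dotProduct_sumElim]
  simp

lemma qf_smul_one_sub {l n : ℕ} (A : Matrix (Fin l) (Fin n) ℝ) (c e : ℝ) (x y : Fin n → ℝ) :
    x ⬝ᵥ ((c • (1 : Matrix (Fin n) (Fin n) ℝ) - e • (Aᵀ * A)) *ᵥ y)
      = c * (x ⬝ᵥ y) - e * ((A *ᵥ x) ⬝ᵥ (A *ᵥ y)) := by
  rw [sub_mulVec, dotProduct_sub, smul_mulVec, smul_mulVec, one_mulVec,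
    dotProduct_smul, dotProduct_smul, smul_eq_mul, smul_eq_mul, dot_AtA]

lemma qf_smul_one_add {l n : ℕ} (A : Matrix (Fin l) (Fin n) ℝ) (c e : ℝ) (x y : Fin n → ℝ) :
    x ⬝ᵥ ((c • (1 : Matrix (Fin n) (Fin n) ℝ) + e • (Aᵀ * A)) *ᵥ y)
      = c * (x ⬝ᵥ y) + e * ((A *ᵥ x) ⬝ᵥ (A *ᵥ y)) := by
  rw [add_mulVec, dotProduct_add, smul_mulVec, smul_mulVec, one_mulVec,
    dotProduct_smul, dotProduct_smul, smul_eq_mul, smul_eq_mul, dot_AtA]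

lemma qf_smul_one {n : ℕ} (c : ℝ) (x : Fin n → ℝ) :
    x ⬝ᵥ ((c • (1 : Matrix (Fin n) (Fin n) ℝ)) *ᵥ x) = c * (x ⬝ᵥ x) := by
  rw [smul_mulVec, one_mulVec, dotProduct_smul, smul_eq_mul]

lemma rayleigh {l n : ℕ} (A : Matrix (Fin l) (Fin n) ℝ) {r : ℝ}
    (hr : maxEig (Aᵀ * A) < r) (w : Fin n → ℝ) :
    (A *ᵥ w) ⬝ᵥ (A *ᵥ w) ≤ r * (w ⬝ᵥ w) := by
  have hC : (Aᵀ * A).IsHermitian := by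
    have := isHermitian_conjTranspose_mul_self A
    rwa [conjTranspose_eq_transpose_of_trivial] at this
  set S := {μ : ℝ | ∃ v : Fin n → ℝ, v ≠ 0 ∧ (Aᵀ * A) *ᵥ v = μ • v} with hSdef
  have hbdd : BddAbove S := by
    refine ⟨∑ i, ∑ j, (A i j) ^ 2, fun μ hμ => ?_⟩
    obtain ⟨v, hv0, hv⟩ := hμ
    have hvv : 0 < v ⬝ᵥ v := by
      rcases lt_or_eq_of_le (dot_self_nonneg v) with h | h
      · exact h
      · exact absurd (dotProduct_self_eq_zero.mp h.symm) hv0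
    have key : μ * (v ⬝ᵥ v) = (A *ᵥ v) ⬝ᵥ (A *ᵥ v) := by
      rw [← dot_AtA, hv, dotProduct_smul, smul_eq_mul]
    have hb : (A *ᵥ v) ⬝ᵥ (A *ᵥ v) ≤ (∑ i, ∑ j, (A i j) ^ 2) * (v ⬝ᵥ v) := by
      unfold dotProduct Matrix.mulVec
      rw [Finset.sum_mul]
      refine Finset.sum_le_sum fun i _ => ?_
      have := Finset.sum_mul_sq_le_sq_mul_sq Finset.univ (fun j => A i j) v
      calc (fun j => A i j) ⬝ᵥ v * ((fun j => A i j) ⬝ᵥ v)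
          = (∑ j, A i j * v j) ^ 2 := by rw [sq]; rfl
        _ ≤ (∑ j, (A i j) ^ 2) * ∑ j, (v j) ^ 2 := this
        _ = (∑ j, (A i j) ^ 2) * ∑ j, v j * v j := by
            congr 1
            exact Finset.sum_congr rfl fun j _ => sq (v j) ▸ rfl
    nlinarith [hvv]
  have hmax : maxEig (Aᵀ * A) = sSup S := rfl
  have heig : ∀ i : Fin n, hC.eigenvalues i < r := by
    intro i
    have hmem : hC.eigenvalues i ∈ S := by
      refine ⟨⇑(hC.eigenvectorBasis i), ?_, hC.mulVec_eigenvectorBasis i⟩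
      intro h
      have hnorm : ‖hC.eigenvectorBasis i‖ = 1 := hC.eigenvectorBasis.orthonormal.1 i
      have hz : hC.eigenvectorBasis i = 0 := by
        ext j; exact congrFun h j
      rw [hz, norm_zero] at hnorm
      norm_num at hnorm
    calc hC.eigenvalues i ≤ sSup S := le_csSup hbdd hmem
      _ < r := hmax ▸ hr
  set U : Matrix (Fin n) (Fin n) ℝ := (hC.eigenvectorUnitary : Matrix (Fin n) (Fin n) ℝ) with hUdef
  have hU1 : U * Uᵀ = 1 := by
    have := mem_unitaryGroup_iff.mp hC.eigenvectorUnitary.2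
    simpa [Matrix.star_eq_conjTranspose, conjTranspose_eq_transpose_of_trivial] using this
  set y : Fin n → ℝ := Uᵀ *ᵥ w with hy
  have hyy : y ⬝ᵥ y = w ⬝ᵥ w := by
    have h1 : y ⬝ᵥ y = (y ᵥ* Uᵀ) ⬝ᵥ w := by
      conv_lhs => rw [hy]
      rw [dotProduct_mulVec]
    rw [h1, vecMul_transpose, hy, mulVec_mulVec, hU1, one_mulVec]
  have hq : w ⬝ᵥ ((Aᵀ * A) *ᵥ w) = ∑ i, hC.eigenvalues i * (y i * y i) := by
    conv_lhs => rw [hC.spectral_theorem]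
    rw [Unitary.conjStarAlgAut_apply]
    rw [Matrix.star_eq_conjTranspose, conjTranspose_eq_transpose_of_trivial,
      ← mulVec_mulVec, ← mulVec_mulVec, dotProduct_mulVec, ← mulVec_transpose]
    show y ⬝ᵥ (diagonal (RCLike.ofReal ∘ hC.eigenvalues) *ᵥ y) = _
    unfold dotProduct
    refine Finset.sum_congr rfl fun i _ => ?_
    rw [mulVec_diagonal]
    simp [Function.comp]
    ring
  have hfin : (A *ᵥ w) ⬝ᵥ (A *ᵥ w) = w ⬝ᵥ ((Aᵀ * A) *ᵥ w) := (dot_AtA A w w).symm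
  rw [hfin, hq, ← hyy]
  have hle : ∑ i, hC.eigenvalues i * (y i * y i) ≤ ∑ i, r * (y i * y i) := by
    refine Finset.sum_le_sum fun i _ => ?_
    exact mul_le_mul_of_nonneg_right (heig i).le (mul_self_nonneg _)
  calc ∑ i, hC.eigenvalues i * (y i * y i) ≤ ∑ i, r * (y i * y i) := hle
    _ = r * (y ⬝ᵥ y) := by rw [dotProduct, Finset.mul_sum]


set_option maxHeartbeats 2000000

/-- Theorem 3.4: the linearized ADMM for (P2) with `f₂` `σ`-strongly convex and
the possibly indefinite proximal matrix `D = τrβI - βA₂ᵀA₂`, `τ ∈ [3/4, 1]`,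
`r > σ_max(A₂ᵀA₂)`, satisfies the additional convergence condition (CC3) with
`rᵏ = β`, `Θ(s, w) = ½s²‖w‖²_{τrI + (1-2τ)A₂ᵀA₂}` and
`H₀(s) = blockdiag(τrs²I, I)`. -/
theorem stmt16 {n₁ n₂ l : ℕ}
    (f₂ : (Fin n₂ → ℝ) → ℝ) (σ : ℝ) (hσ : 0 < σ)
    (A₁ : Matrix (Fin l) (Fin n₁) ℝ) (A₂ : Matrix (Fin l) (Fin n₂) ℝ) (b : Fin l → ℝ)
    (τ r : ℝ) (hτ : τ ∈ Set.Icc (3 / 4 : ℝ) 1) (hr : maxEig (A₂ᵀ * A₂) < r)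
    (βm β βp : ℝ) (hβm : 0 < βm) (hβ : 0 < β) (hβp : 0 < βp)
    (hle1 : βm ≤ β) (hle2 : β ≤ βp)
    (hgrow : β * (τ * r * β + σ) ≥ τ * r * βp ^ 2)
    (D Dm : Matrix (Fin n₂) (Fin n₂) ℝ)
    (hD : D = (τ * r * β) • 1 - β • (A₂ᵀ * A₂))
    (hDm : Dm = (τ * r * βm) • 1 - βm • (A₂ᵀ * A₂))
    (x1kk : Fin n₁ → ℝ) (x2km x2k x2kk x2' : Fin n₂ → ℝ)
    (lamk lam : Fin l → ℝ)
    (lamkk lamt : Fin l → ℝ)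
    (hlamkk : lamkk = lamk - β • (A₁.mulVec x1kk + A₂.mulVec x2kk - b))
    (hlamt : lamt = lamk - β • (A₁.mulVec x1kk + A₂.mulVec x2k - b))
    (hi : ∀ x₂ : Fin n₂ → ℝ,
      f₂ x₂ - f₂ x2kk + (x₂ - x2kk) ⬝ᵥ (-(A₂ᵀ.mulVec lamkk) + D.mulVec (x2kk - x2k))
        ≥ σ / 2 * ((x2kk - x₂) ⬝ᵥ (x2kk - x₂)))
    (hii : ∀ x₂ : Fin n₂ → ℝ,
      f₂ x₂ - f₂ x2k + (x₂ - x2k) ⬝ᵥ (-(A₂ᵀ.mulVec lamk) + Dm.mulVec (x2k - x2km))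
        ≥ σ / 2 * ((x2k - x₂) ⬝ᵥ (x2k - x₂)))
    (H : Matrix (Fin n₂ ⊕ Fin l) (Fin n₂ ⊕ Fin l) ℝ)
    (hH : H = Matrix.fromBlocks ((τ * r * β) • 1) 0 0 ((1 / β) • 1))
    (G : Matrix (Fin n₂ ⊕ Fin l) (Fin n₂ ⊕ Fin l) ℝ)
    (hG : G = Matrix.fromBlocks D 0 0 ((1 / β) • 1))
    (H₀ : ℝ → Matrix (Fin n₂ ⊕ Fin l) (Fin n₂ ⊕ Fin l) ℝ)
    (hH₀ : ∀ s, H₀ s = Matrix.fromBlocks ((τ * r * s ^ 2) • 1) 0 0 1)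
    (Θ : ℝ → (Fin n₂ → ℝ) → ℝ)
    (hΘ : ∀ s w, Θ s w =
      (1 / 2) * s ^ 2 * qf ((τ * r) • 1 + (1 - 2 * τ) • (A₂ᵀ * A₂)) w) :
    β * (qf H (Sum.elim x2kk lamkk - Sum.elim x2' lam)
        + σ * ((x2kk - x2') ⬝ᵥ (x2kk - x2'))
        - qf H (Sum.elim x2k lamk - Sum.elim x2' lam)
        + qf G (Sum.elim x2k lamk - Sum.elim x2kk lamt))
      ≥ qf (H₀ βp) (Sum.elim x2kk lamkk - Sum.elim x2' lam)
        - qf (H₀ β) (Sum.elim x2k lamk - Sum.elim x2' lam)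
        + Θ βp (x2k - x2kk) - Θ β (x2km - x2k) := by
  obtain ⟨hτ1, hτ2⟩ := hτ
  -- abbreviations
  set d : Fin n₂ → ℝ := x2k - x2kk with hd
  set dm : Fin n₂ → ℝ := x2km - x2k with hdm
  set u : Fin n₂ → ℝ := x2kk - x2' with hu
  set u0 : Fin n₂ → ℝ := x2k - x2' with hu0
  set q1 : Fin l → ℝ := lamkk - lam with hq1d
  set q0 : Fin l → ℝ := lamk - lam with hq0d
  set p : Fin l → ℝ := lamk - lamt with hpd
  set Ad : Fin l → ℝ := A₂ *ᵥ d with hAd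
  set Adm : Fin l → ℝ := A₂ *ᵥ dm with hAdm
  -- relation lamk - lamkk = p - β • Ad
  have hrel : lamk - lamkk = p - β • Ad := by
    rw [hpd, hlamkk, hlamt, hAd, hd, mulVec_sub]
    module
  -- scalarize the strong-convexity inequalities
  have h1 := hi x2k
  have h2 := hii x2kk
  have e1 : x2k - x2kk = d := hd.symm
  have e2 : x2kk - x2k = -d := by rw [hd]; module
  have e3 : x2k - x2km = -dm := by rw [hdm]; module
  have h1s : f₂ x2k - f₂ x2kk - Ad ⬝ᵥ lamkk - (τ * r * β * (d ⬝ᵥ d) - β * (Ad ⬝ᵥ Ad))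
      ≥ σ / 2 * (d ⬝ᵥ d) := by
    rw [e1, e2] at h1
    simp only [dotProduct_add, dotProduct_neg, neg_dotProduct, neg_neg, mulVec_neg,
      hD, qf_smul_one_sub, dot_At] at h1
    rw [← hAd] at h1
    linarith [h1]
  have h2s : f₂ x2kk - f₂ x2k + Ad ⬝ᵥ lamk + (τ * r * βm * (d ⬝ᵥ dm) - βm * (Ad ⬝ᵥ Adm))
      ≥ σ / 2 * (d ⬝ᵥ d) := by
    rw [e2, e3] at h2
    simp only [dotProduct_add, dotProduct_neg, neg_dotProduct, neg_neg, mulVec_neg,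
      hDm, qf_smul_one_sub, dot_At] at h2
    rw [← hAd, ← hAdm] at h2
    linarith [h2]
  have hAdrel : Ad ⬝ᵥ lamk - Ad ⬝ᵥ lamkk = Ad ⬝ᵥ p - β * (Ad ⬝ᵥ Ad) := by
    rw [← dotProduct_sub, hrel, dotProduct_sub, dotProduct_smul, smul_eq_mul]
  have hstar : Ad ⬝ᵥ p - τ * r * β * (d ⬝ᵥ d) + τ * r * βm * (d ⬝ᵥ dm) - βm * (Ad ⬝ᵥ Adm)
      ≥ σ * (d ⬝ᵥ d) := by linarith [h1s, h2s, hAdrel]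
  -- completed square for p
  have hsq : 0 ≤ p ⬝ᵥ p - β * (Ad ⬝ᵥ p) + β ^ 2 / 4 * (Ad ⬝ᵥ Ad) := by
    have h := dot_self_nonneg (p - (β / 2) • Ad)
    rw [dot_sub_expand, dotProduct_comm p ((β / 2) • Ad)] at h
    simp only [dotProduct_smul, smul_dotProduct, smul_eq_mul] at h
    linarith [h]
  -- spectral bounds
  have spec1 : Ad ⬝ᵥ Ad ≤ r * (d ⬝ᵥ d) := hAd ▸ rayleigh A₂ hr d
  have spec2 : (Ad ⬝ᵥ Ad) - 2 * (Ad ⬝ᵥ Adm) + (Adm ⬝ᵥ Adm)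
      ≤ r * ((d ⬝ᵥ d) - 2 * (d ⬝ᵥ dm) + (dm ⬝ᵥ dm)) := by
    have h := rayleigh A₂ hr (d - dm)
    rw [mulVec_sub, ← hAd, ← hAdm, dot_sub_expand, dot_sub_expand] at h
    linarith [h]
  have spec3 : (Ad ⬝ᵥ Ad) + 2 * (Ad ⬝ᵥ Adm) + (Adm ⬝ᵥ Adm)
      ≤ r * ((d ⬝ᵥ d) + 2 * (d ⬝ᵥ dm) + (dm ⬝ᵥ dm)) := by
    have h := rayleigh A₂ hr (d + dm)
    rw [mulVec_add, ← hAd, ← hAdm, dot_add_expand, dot_add_expand] at h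
    linarith [h]
  have nn1 : 0 ≤ (Ad ⬝ᵥ Ad) + 2 * (Ad ⬝ᵥ Adm) + (Adm ⬝ᵥ Adm) := by
    have h := dot_self_nonneg (Ad + Adm); rw [dot_add_expand] at h; linarith
  have nn2 : 0 ≤ (Ad ⬝ᵥ Ad) - 2 * (Ad ⬝ᵥ Adm) + (Adm ⬝ᵥ Adm) := by
    have h := dot_self_nonneg (Ad - Adm); rw [dot_sub_expand] at h; linarith
  have nnu := dot_self_nonneg u
  have nnd := dot_self_nonneg d
  have nndm := dot_self_nonneg dm
  have nna := dot_self_nonneg Ad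
  -- rewrite the goal into scalar form
  have gq1 : qf H (Sum.elim x2kk lamkk - Sum.elim x2' lam)
      = τ * r * β * (u ⬝ᵥ u) + (1 / β) * (q1 ⬝ᵥ q1) := by
    rw [hH, sum_elim_sub, qf_blocks, ← hu, ← hq1d, qf_smul_one, qf_smul_one]
  have gq2 : qf H (Sum.elim x2k lamk - Sum.elim x2' lam)
      = τ * r * β * (u0 ⬝ᵥ u0) + (1 / β) * (q0 ⬝ᵥ q0) := by
    rw [hH, sum_elim_sub, qf_blocks, ← hu0, ← hq0d, qf_smul_one, qf_smul_one]
  have gq3 : qf G (Sum.elim x2k lamk - Sum.elim x2kk lamt)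
      = (τ * r * β * (d ⬝ᵥ d) - β * (Ad ⬝ᵥ Ad)) + (1 / β) * (p ⬝ᵥ p) := by
    rw [hG, sum_elim_sub, qf_blocks, ← hd, ← hpd, hD, qf_smul_one_sub, qf_smul_one]
  have gq4 : qf (H₀ βp) (Sum.elim x2kk lamkk - Sum.elim x2' lam)
      = τ * r * βp ^ 2 * (u ⬝ᵥ u) + (q1 ⬝ᵥ q1) := by
    rw [hH₀, sum_elim_sub, qf_blocks, ← hu, ← hq1d, qf_smul_one, one_mulVec]
  have gq5 : qf (H₀ β) (Sum.elim x2k lamk - Sum.elim x2' lam)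
      = τ * r * β ^ 2 * (u0 ⬝ᵥ u0) + (q0 ⬝ᵥ q0) := by
    rw [hH₀, sum_elim_sub, qf_blocks, ← hu0, ← hq0d, qf_smul_one, one_mulVec]
  have gq6 : Θ βp d
      = 1 / 2 * βp ^ 2 * (τ * r * (d ⬝ᵥ d) + (1 - 2 * τ) * (Ad ⬝ᵥ Ad)) := by
    rw [hΘ]
    unfold qf
    rw [qf_smul_one_add, ← hAd]
  have gq7 : Θ β dm
      = 1 / 2 * β ^ 2 * (τ * r * (dm ⬝ᵥ dm) + (1 - 2 * τ) * (Adm ⬝ᵥ Adm)) := by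
    rw [hΘ]
    unfold qf
    rw [qf_smul_one_add, ← hAdm]
  rw [gq1]
  rw [gq2]
  rw [gq3]
  rw [gq4]
  rw [gq5]
  rw [gq6]
  rw [gq7]
  -- certificate pieces
  clear_value d dm u u0 q1 q0 p Ad Adm
  clear hi hii hlamkk hlamt hD hDm hH hG hH₀ hΘ gq1 gq2 gq3 gq4 gq5 gq6 gq7
  clear h1 h2 h1s h2s e1 e2 e3 hrel hAdrel hd hdm hu hu0 hq1d hq0d hpd hAd hAdm
  clear f₂ A₁ b H G H₀ Θ D Dm x1kk x2km x2k x2kk x2' lamk lam lamkk lamt hr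
  have hgrow' : 0 ≤ τ * r * β ^ 2 + β * σ - τ * r * βp ^ 2 := by nlinarith [hgrow]
  have T1 : 0 ≤ (τ * r * β ^ 2 + β * σ - τ * r * βp ^ 2) * (u ⬝ᵥ u) :=
    mul_nonneg hgrow' nnu
  have T3 : 0 ≤ β * ((Ad ⬝ᵥ p) - τ * r * β * (d ⬝ᵥ d) + τ * r * βm * (d ⬝ᵥ dm)
      - βm * (Ad ⬝ᵥ Adm) - σ * (d ⬝ᵥ d)) := mul_nonneg hβ.le (by linarith [hstar])
  have T4 : 0 ≤ ((d ⬝ᵥ d) / 2) * (τ * r * β ^ 2 + β * σ - τ * r * βp ^ 2) :=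
    mul_nonneg (by linarith [nnd]) hgrow'
  have hbp2 : 0 ≤ βp ^ 2 - β ^ 2 := by nlinarith [mul_nonneg (sub_nonneg.mpr hle2) (by linarith : (0:ℝ) ≤ βp + β)]
  have T5 : 0 ≤ (2 * τ - 1) / 2 * (βp ^ 2 - β ^ 2) * (Ad ⬝ᵥ Ad) :=
    mul_nonneg (mul_nonneg (by linarith) hbp2) nna
  have T6 : 0 ≤ β * σ / 2 * (d ⬝ᵥ d) :=
    mul_nonneg (by positivity) nnd
  have Qp : 0 ≤ τ / 2 * (r * ((d ⬝ᵥ d) - 2 * (d ⬝ᵥ dm) + (dm ⬝ᵥ dm))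
        - ((Ad ⬝ᵥ Ad) - 2 * (Ad ⬝ᵥ Adm) + (Adm ⬝ᵥ Adm)))
      + τ * (r * (d ⬝ᵥ d) - (Ad ⬝ᵥ Ad))
      + (1 - τ) / 2 * ((Ad ⬝ᵥ Ad) + 2 * (Ad ⬝ᵥ Adm) + (Adm ⬝ᵥ Adm))
      + (3 * τ - 9 / 4) * (Ad ⬝ᵥ Ad) := by
    have c1 : 0 ≤ τ / 2 * (r * ((d ⬝ᵥ d) - 2 * (d ⬝ᵥ dm) + (dm ⬝ᵥ dm))
        - ((Ad ⬝ᵥ Ad) - 2 * (Ad ⬝ᵥ Adm) + (Adm ⬝ᵥ Adm))) :=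
      mul_nonneg (by linarith) (by linarith [spec2])
    have c2 : 0 ≤ τ * (r * (d ⬝ᵥ d) - (Ad ⬝ᵥ Ad)) :=
      mul_nonneg (by linarith) (by linarith [spec1])
    have c3 : 0 ≤ (1 - τ) / 2 * ((Ad ⬝ᵥ Ad) + 2 * (Ad ⬝ᵥ Adm) + (Adm ⬝ᵥ Adm)) :=
      mul_nonneg (by linarith) nn1
    have c4 : 0 ≤ (3 * τ - 9 / 4) * (Ad ⬝ᵥ Ad) := mul_nonneg (by linarith) nna
    linarith
  have Qm : 0 ≤ τ / 2 * (r * ((d ⬝ᵥ d) + 2 * (d ⬝ᵥ dm) + (dm ⬝ᵥ dm))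
        - ((Ad ⬝ᵥ Ad) + 2 * (Ad ⬝ᵥ Adm) + (Adm ⬝ᵥ Adm)))
      + τ * (r * (d ⬝ᵥ d) - (Ad ⬝ᵥ Ad))
      + (1 - τ) / 2 * ((Ad ⬝ᵥ Ad) - 2 * (Ad ⬝ᵥ Adm) + (Adm ⬝ᵥ Adm))
      + (3 * τ - 9 / 4) * (Ad ⬝ᵥ Ad) := by
    have c1 : 0 ≤ τ / 2 * (r * ((d ⬝ᵥ d) + 2 * (d ⬝ᵥ dm) + (dm ⬝ᵥ dm))
        - ((Ad ⬝ᵥ Ad) + 2 * (Ad ⬝ᵥ Adm) + (Adm ⬝ᵥ Adm))) :=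
      mul_nonneg (by linarith) (by linarith [spec3])
    have c2 : 0 ≤ τ * (r * (d ⬝ᵥ d) - (Ad ⬝ᵥ Ad)) :=
      mul_nonneg (by linarith) (by linarith [spec1])
    have c3 : 0 ≤ (1 - τ) / 2 * ((Ad ⬝ᵥ Ad) - 2 * (Ad ⬝ᵥ Adm) + (Adm ⬝ᵥ Adm)) :=
      mul_nonneg (by linarith) nn2
    have c4 : 0 ≤ (3 * τ - 9 / 4) * (Ad ⬝ᵥ Ad) := mul_nonneg (by linarith) nna
    linarith
  have hcp : 0 ≤ (β ^ 2 + β * βm) / 2 := by nlinarith [hβ.le, hβm.le]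
  have hcm : 0 ≤ (β ^ 2 - β * βm) / 2 := by nlinarith [hle1, hβ.le]
  have T7 : 0 ≤ (β ^ 2 + β * βm) / 2 * (τ / 2 * (r * ((d ⬝ᵥ d) - 2 * (d ⬝ᵥ dm) + (dm ⬝ᵥ dm))
        - ((Ad ⬝ᵥ Ad) - 2 * (Ad ⬝ᵥ Adm) + (Adm ⬝ᵥ Adm)))
      + τ * (r * (d ⬝ᵥ d) - (Ad ⬝ᵥ Ad))
      + (1 - τ) / 2 * ((Ad ⬝ᵥ Ad) + 2 * (Ad ⬝ᵥ Adm) + (Adm ⬝ᵥ Adm))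
      + (3 * τ - 9 / 4) * (Ad ⬝ᵥ Ad)) := mul_nonneg hcp Qp
  have T8 : 0 ≤ (β ^ 2 - β * βm) / 2 * (τ / 2 * (r * ((d ⬝ᵥ d) + 2 * (d ⬝ᵥ dm) + (dm ⬝ᵥ dm))
        - ((Ad ⬝ᵥ Ad) + 2 * (Ad ⬝ᵥ Adm) + (Adm ⬝ᵥ Adm)))
      + τ * (r * (d ⬝ᵥ d) - (Ad ⬝ᵥ Ad))
      + (1 - τ) / 2 * ((Ad ⬝ᵥ Ad) - 2 * (Ad ⬝ᵥ Adm) + (Adm ⬝ᵥ Adm))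
      + (3 * τ - 9 / 4) * (Ad ⬝ᵥ Ad)) := mul_nonneg hcm Qm
  have hbne : β ≠ 0 := ne_of_gt hβ
  have expand : β * (τ * r * β * (u ⬝ᵥ u) + 1 / β * (q1 ⬝ᵥ q1) + σ * (u ⬝ᵥ u)
        - (τ * r * β * (u0 ⬝ᵥ u0) + 1 / β * (q0 ⬝ᵥ q0))
        + ((τ * r * β * (d ⬝ᵥ d) - β * (Ad ⬝ᵥ Ad)) + 1 / β * (p ⬝ᵥ p)))
      = τ * r * β ^ 2 * (u ⬝ᵥ u) + (q1 ⬝ᵥ q1) + β * σ * (u ⬝ᵥ u)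
        - τ * r * β ^ 2 * (u0 ⬝ᵥ u0) - (q0 ⬝ᵥ q0)
        + τ * r * β ^ 2 * (d ⬝ᵥ d) - β ^ 2 * (Ad ⬝ᵥ Ad) + (p ⬝ᵥ p) := by
    field_simp
    ring
  -- final linear combination
  linarith [T1, hsq, T3, T4, T5, T6, T7, T8, expand]
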